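/- arXiv:1210.6100 — 4 statements merged into one kernel-verified Lean document; each statement's English description precedes it below -/
import Mathlib

section
/- Let H be a complex Hilbert space, let D be a bounded selfadjoint operator on H, and let f : ℝ → ℂ be a Schwartz function. Then f(D) = (1/(2π)) ∫_ℝ f̂(t) · e^{itD} dt, where the integral is a Bochner integral in the Banach space of bounded operators on H. -/
open MeasureTheory
open FourierTransform Real Complex

/-- The Fourier transform with the normalization `f̂(t) = ∫ f(x) e^{-itx} dx`. -/
noncomputable def fourierHat (f : ℝ → ℂ) (t : ℝ) : ℂ :=
  ∫ x : ℝ, f x * Complex.exp (-(Complex.I * t * x))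

/-- Continuous functional calculus of a (selfadjoint) bounded operator `D`
applied to a function `f : ℝ → ℂ`.  Since the spectrum of a selfadjoint
operator is real, we implement it via the `ℂ`-valued continuous functional
calculus applied to `z ↦ f (Re z)`. -/
noncomputable def fc {H : Type*} [NormedAddCommGroup H] [InnerProductSpace ℂ H]
    [CompleteSpace H] (f : ℝ → ℂ) (D : H →L[ℂ] H) : H →L[ℂ] H :=
  cfc (fun z : ℂ => f z.re) D

lemma hat_eq (f : SchwartzMap ℝ ℂ) (s : ℝ) :
    fourierHat (fun x => f x) (2 * Real.pi * s) = 𝓕 (fun x => f x) s := by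
  rw [fourierHat, Real.fourier_eq']
  congr 1
  ext v
  rw [smul_eq_mul, mul_comm]
  congr 1
  simp only [RCLike.inner_apply, starRingEnd_apply, star_trivial]
  push_cast
  ring

lemma hat_int (f : SchwartzMap ℝ ℂ) : Integrable (fourierHat (fun x => f x)) := by
  have h2π : (2 * Real.pi) ≠ 0 := by positivity
  have : fourierHat (fun x => f x) = fun t => 𝓕 (fun x => f x) ((2 * Real.pi)⁻¹ * t) := by
    ext t
    rw [← hat_eq f ((2 * Real.pi)⁻¹ * t)]
    congr 1
    field_simp
  rw [this, ← SchwartzMap.fourier_coe]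
  exact (SchwartzMap.integrable _).comp_mul_left' (inv_ne_zero h2π)

lemma key_scalar (f : SchwartzMap ℝ ℂ) (x : ℝ) :
    (1 / (2 * (Real.pi : ℂ))) *
      (∫ t : ℝ, fourierHat (fun x => f x) t * Complex.exp (Complex.I * t * x)) = f x := by
  have h2π : (2 * Real.pi) ≠ 0 := by positivity
  set g : ℝ → ℂ := fun t => fourierHat (fun x => f x) t * Complex.exp (Complex.I * t * x) with hg
  have hsub : (∫ s : ℝ, g (2 * Real.pi * s)) = |(2 * Real.pi)⁻¹| • ∫ t, g t :=
    MeasureTheory.Measure.integral_comp_mul_left g (2 * Real.pi)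
  have hinv : (∫ s : ℝ, g (2 * Real.pi * s)) = f x := by
    have : (∫ s : ℝ, g (2 * Real.pi * s)) = 𝓕⁻ (𝓕 (fun x => f x)) x := by
      rw [Real.fourierInv_eq']
      congr 1
      ext s
      rw [hg]
      simp only [smul_eq_mul]
      rw [hat_eq f s, mul_comm]
      congr 1
      simp only [RCLike.inner_apply, starRingEnd_apply, star_trivial]
      push_cast
      ring
    rw [this]
    refine Integrable.fourierInv_fourier_eq f.integrable ?_ f.continuous.continuousAt
    rw [← SchwartzMap.fourier_coe]
    exact SchwartzMap.integrable _
  have : (∫ t, g t) = (2 * Real.pi : ℝ) • (f x : ℂ) := by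
    rw [← hinv, hsub, abs_of_pos (by positivity : (0:ℝ) < (2 * Real.pi)⁻¹), smul_smul]
    rw [mul_inv_cancel₀ h2π, one_smul]
  rw [this, Complex.real_smul]
  have h2πc : (2 * (Real.pi : ℂ)) ≠ 0 := by
    simp [Real.pi_ne_zero]
  push_cast
  rw [one_div, ← mul_assoc, inv_mul_cancel₀ h2πc, one_mul]


/-- for a bounded selfadjoint operator `D` on a complex Hilbert
space and a Schwartz function `f`, one has
`f(D) = (1/(2π)) ∫_ℝ f̂(t) e^{itD} dt` (a Bochner integral in `B(H)`). -/
theorem statement0 {H : Type*} [NormedAddCommGroup H] [InnerProductSpace ℂ H]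
    [CompleteSpace H] (D : H →L[ℂ] H) (hD : IsSelfAdjoint D)
    (f : SchwartzMap ℝ ℂ) :
    fc (fun x => f x) D =
      (1 / (2 * (Real.pi : ℂ))) •
        ∫ t : ℝ, fourierHat (fun x => f x) t •
          fc (fun x : ℝ => Complex.exp (Complex.I * t * x)) D := by
  have hn : IsStarNormal D := hD.isStarNormal
  set K := spectrum ℂ D with hK
  let L : C(K, ℂ) →L[ℂ] (H →L[ℂ] H) := cfcL hn
  let G : C(ℝ × K, ℂ) :=
    ⟨fun p => Complex.exp (Complex.I * p.1 * (p.2 : ℂ).re), by fun_prop⟩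
  let E : ℝ → C(K, ℂ) := fun t => G.curry t
  have hE : ∀ t : ℝ, fc (fun x : ℝ => Complex.exp (Complex.I * t * x)) D = L (E t) := by
    intro t
    rw [fc, cfc_apply (fun z : ℂ => Complex.exp (Complex.I * t * z.re)) D hn
      (Continuous.continuousOn (by fun_prop))]
    rfl
  have hf0 : fc (fun x => f x) D = L ⟨fun z : K => f (z : ℂ).re, by fun_prop⟩ := by
    rw [fc, cfc_apply (fun z : ℂ => f z.re) D hn (Continuous.continuousOn (by fun_prop))]
    rfl
  let F : ℝ → C(K, ℂ) := fun t => fourierHat (fun x => f x) t • E t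
  have hEnorm : ∀ t : ℝ, ‖E t‖ ≤ 1 := by
    intro t
    refine ContinuousMap.norm_le _ zero_le_one |>.mpr fun z => ?_
    show ‖Complex.exp (Complex.I * t * (z : ℂ).re)‖ ≤ 1
    rw [Complex.norm_exp]
    simp [Complex.mul_re]
  have hFint : Integrable F := by
    refine Integrable.mono' (hat_int f).norm ?_ ?_
    · have hGc : Continuous E := (ContinuousMap.curry G).continuous
      exact (hat_int f).aestronglyMeasurable.smul hGc.aestronglyMeasurable
    · filter_upwards with t
      show ‖fourierHat (fun x => f x) t • E t‖ ≤ _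
      calc ‖fourierHat (fun x => f x) t • E t‖
          ≤ ‖fourierHat (fun x => f x) t‖ * ‖E t‖ := norm_smul_le (fourierHat (fun x => f x) t) (E t)
        _ ≤ ‖fourierHat (fun x => f x) t‖ * 1 :=
            mul_le_mul_of_nonneg_left (hEnorm t) (norm_nonneg _)
        _ = ‖fourierHat (fun x => f x) t‖ := mul_one _
  have hint : (∫ t : ℝ, fourierHat (fun x => f x) t •
      fc (fun x : ℝ => Complex.exp (Complex.I * t * x)) D) = L (∫ t, F t) := by
    have h1 : ∀ t : ℝ, fourierHat (fun x => f x) t •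
        fc (fun x : ℝ => Complex.exp (Complex.I * t * x)) D = L (F t) := fun t => by
      rw [hE t, ← _root_.map_smul]
    simp_rw [h1]
    exact L.integral_comp_comm hFint
  rw [hf0, hint, ← _root_.map_smul]
  congr 1
  ext z
  have heval : (∫ t, F t) z = ∫ t, (F t) z :=
    ((ContinuousMap.evalCLM ℂ z).integral_comp_comm hFint).symm
  show f (z : ℂ).re = ((1 / (2 * (Real.pi : ℂ))) • ∫ t, F t) z
  rw [ContinuousMap.smul_apply, heval]
  exact (key_scalar f (z : ℂ).re).symm
end

section
/- Let H be a complex Hilbert space, let D and E be bounded selfadjoint operators on H, let P be a bounded operator on H, and let r > 0. Suppose cos(tD) ∘ P = cos(tE) ∘ P for all t ∈ [0, r]. Then for every even Schwartz function f : ℝ → ℂ whose Fourier transform f̂ is supported in [-r, r], one has f(D) ∘ P = f(E) ∘ P. -/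
open MeasureTheory FourierTransform

lemma fourierHat_eq_fourierIntegral (f : ℝ → ℂ) (s : ℝ) :
    fourierHat f s = 𝓕 f (s / (2 * Real.pi)) := by
  rw [Real.fourier_real_eq_integral_exp_smul]
  unfold fourierHat
  congr 1; ext x
  rw [smul_eq_mul, mul_comm]
  congr 1
  have h : (-2 * Real.pi * x * (s / (2 * Real.pi)) : ℝ) = -(s * x) := by
    field_simp
  rw [h]
  push_cast
  ring

lemma fourierHat_even (f : ℝ → ℂ) (hf : ∀ x, f (-x) = f x) (t : ℝ) :
    fourierHat f (-t) = fourierHat f t := by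
  unfold fourierHat
  rw [← integral_neg_eq_self (fun x => f x * Complex.exp (-(Complex.I * t * x))) volume]
  congr 1; ext x
  rw [hf]
  congr 1
  push_cast
  ring_nf

lemma fourierHat_continuous (f : SchwartzMap ℝ ℂ) :
    Continuous (fourierHat fun x => f x) := by
  have h : (fourierHat fun x => f x) =
      fun s => (SchwartzMap.fourierTransformCLM ℂ f) (s / (2 * Real.pi)) := by
    ext s
    rw [fourierHat_eq_fourierIntegral, SchwartzMap.fourierTransformCLM_apply, SchwartzMap.fourier_coe]
  rw [h]
  exact (SchwartzMap.fourierTransformCLM ℂ f).continuous.comp (by fun_prop)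

lemma inversion (f : SchwartzMap ℝ ℂ) (x : ℝ) :
    ∫ s : ℝ, fourierHat (fun y => f y) s * Complex.exp (Complex.I * s * x)
      = (2 * Real.pi : ℝ) • (f x : ℂ) := by
  have hft : Integrable (𝓕 (fun y => f y)) volume := by
    have := (SchwartzMap.fourierTransformCLM ℂ f).integrable (μ := volume)
    rwa [SchwartzMap.fourierTransformCLM_apply] at this
  have hinv : 𝓕⁻ (𝓕 (fun y => f y)) = fun y => f y :=
    f.continuous.fourierInv_fourier_eq f.integrable hft
  set g : ℝ → ℂ :=
    fun ξ => Complex.exp (Complex.I * (2 * Real.pi * ξ) * x) * 𝓕 (fun y => f y) ξ with hg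
  have h1 : ∫ ξ : ℝ, g ξ = (f x : ℂ) := by
    have h2 : 𝓕⁻ (𝓕 (fun y => f y)) x = ∫ ξ : ℝ, g ξ := by
      rw [Real.fourierInv_eq']
      congr 1; ext ξ
      rw [smul_eq_mul]
      congr 1
      push_cast
      simp [RCLike.inner_apply]
      ring_nf
    rw [← h2, hinv]
  calc ∫ s : ℝ, fourierHat (fun y => f y) s * Complex.exp (Complex.I * s * x)
      = ∫ s : ℝ, g (s / (2 * Real.pi)) := by
        congr 1; ext s
        rw [hg, fourierHat_eq_fourierIntegral]
        simp only []
        rw [mul_comm]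
        congr 2
        push_cast
        have h2π : ((Real.pi : ℂ)) ≠ 0 := by
          exact_mod_cast Real.pi_ne_zero
        field_simp
    _ = |2 * Real.pi| • ∫ ξ, g ξ := Measure.integral_comp_div g (2 * Real.pi)
    _ = (2 * Real.pi : ℝ) • (f x : ℂ) := by
        rw [h1, abs_of_pos (by positivity)]

lemma scalar_repr (r : ℝ) (f : SchwartzMap ℝ ℂ)
    (hf_even : ∀ x : ℝ, f (-x) = f x)
    (hf_supp : Function.support (fourierHat fun x => f x) ⊆ Set.Icc (-r) r) (x : ℝ) :
    (f x : ℂ) = ∫ s in Set.Icc (-r) r,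
      (((2 * Real.pi)⁻¹ : ℝ) : ℂ) * fourierHat (fun y => f y) s * Complex.cos ((s : ℂ) * x) := by
  have hzero : ∀ s : ℝ, s ∉ Set.Icc (-r) r → fourierHat (fun y => f y) s = 0 := by
    intro s hs
    by_contra h
    exact hs (hf_supp h)
  have hc := fourierHat_continuous f
  have hsin : ∫ s : ℝ, fourierHat (fun y => f y) s * Complex.sin ((s : ℂ) * x) = 0 := by
    set w : ℝ → ℂ := fun s => fourierHat (fun y => f y) s * Complex.sin ((s : ℂ) * x) with hw
    have hodd : ∀ s : ℝ, w (-s) = -w s := by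
      intro s
      rw [hw]
      simp only []
      rw [fourierHat_even _ hf_even]
      push_cast
      rw [neg_mul, Complex.sin_neg]
      ring
    have h1 : ∫ s : ℝ, w s = ∫ s : ℝ, w (-s) := (integral_neg_eq_self w volume).symm
    have h2 : ∫ s : ℝ, w (-s) = - ∫ s : ℝ, w s := by
      simp_rw [hodd]
      exact integral_neg w
    have h3 : ∫ s : ℝ, w s = - ∫ s : ℝ, w s := h1.trans h2
    linear_combination h3 / 2
  have hsinIcc : ∫ s in Set.Icc (-r) r,
      fourierHat (fun y => f y) s * Complex.sin ((s : ℂ) * x) = 0 := by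
    rw [setIntegral_eq_integral_of_forall_compl_eq_zero (fun s hs => by rw [hzero s hs, zero_mul])]
    exact hsin
  have hcos_int : IntegrableOn
      (fun s : ℝ => fourierHat (fun y => f y) s * Complex.cos ((s : ℂ) * x))
      (Set.Icc (-r) r) volume := (Continuous.mul hc (by fun_prop)).integrableOn_Icc
  have hsin_int : IntegrableOn
      (fun s : ℝ => fourierHat (fun y => f y) s * Complex.sin ((s : ℂ) * x))
      (Set.Icc (-r) r) volume := (Continuous.mul hc (by fun_prop)).integrableOn_Icc
  have hmain : ∫ s in Set.Icc (-r) r, fourierHat (fun y => f y) s * Complex.cos ((s : ℂ) * x)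
      = (2 * Real.pi : ℝ) • (f x : ℂ) := by
    rw [← inversion f x,
      ← setIntegral_eq_integral_of_forall_compl_eq_zero
        (f := fun s : ℝ => fourierHat (fun y => f y) s * Complex.exp (Complex.I * s * x))
        (fun s hs => by simp [hzero s hs])]
    have hsplit : ∀ s : ℝ, fourierHat (fun y => f y) s * Complex.exp (Complex.I * s * x)
        = fourierHat (fun y => f y) s * Complex.cos ((s : ℂ) * x)
          + (fourierHat (fun y => f y) s * Complex.sin ((s : ℂ) * x)) * Complex.I := by
      intro s
      rw [show Complex.I * (s : ℂ) * (x : ℂ) = ((s : ℂ) * x) * Complex.I by ring,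
        Complex.exp_mul_I]
      ring
    simp_rw [hsplit]
    rw [integral_add hcos_int (hsin_int.mul_const _), integral_mul_const, hsinIcc, zero_mul,
      add_zero]
  simp_rw [mul_assoc]
  rw [MeasureTheory.integral_const_mul, hmain, Complex.real_smul, ← mul_assoc,
    ← Complex.ofReal_mul, inv_mul_cancel₀ (ne_of_gt Real.two_pi_pos), Complex.ofReal_one, one_mul]

section op

variable {H : Type*} [NormedAddCommGroup H] [InnerProductSpace ℂ H] [CompleteSpace H]

lemma op_repr (D : H →L[ℂ] H) (hD : IsSelfAdjoint D) (r : ℝ)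
    (f : SchwartzMap ℝ ℂ) (hf_even : ∀ x : ℝ, f (-x) = f x)
    (hf_supp : Function.support (fourierHat fun x => f x) ⊆ Set.Icc (-r) r) :
    Integrable (fun s : ℝ => ((((2 * Real.pi)⁻¹ : ℝ) : ℂ) * fourierHat (fun y => f y) s) •
        fc (fun x : ℝ => Complex.cos ((s : ℂ) * x)) D) (volume.restrict (Set.Icc (-r) r)) ∧
    fc (fun x => f x) D = ∫ s in Set.Icc (-r) r,
      ((((2 * Real.pi)⁻¹ : ℝ) : ℂ) * fourierHat (fun y => f y) s) •
        fc (fun x : ℝ => Complex.cos ((s : ℂ) * x)) D := by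
  have hD' : IsStarNormal D := hD.isStarNormal
  set c : ℝ → ℂ := fun s => (((2 * Real.pi)⁻¹ : ℝ) : ℂ) * fourierHat (fun y => f y) s with hcdef
  have hc : Continuous c := continuous_const.mul (fourierHat_continuous f)
  set G : ℝ → C(spectrum ℂ D, ℂ) :=
    fun s => (ContinuousMap.curry
      ⟨fun p : ℝ × spectrum ℂ D => Complex.cos ((p.1 : ℂ) * ((p.2 : ℂ).re : ℂ)),
        by fun_prop⟩) s with hGdef
  have hG : Continuous G := (ContinuousMap.curry _).continuous
  set Fm : ℝ → C(spectrum ℂ D, ℂ) := fun s => c s • G s with hFdef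
  have hFcont : Continuous Fm := hc.smul hG
  have hFint : IntegrableOn Fm (Set.Icc (-r) r) volume := hFcont.integrableOn_Icc
  have hfc_cos : ∀ s : ℝ,
      fc (fun x : ℝ => Complex.cos ((s : ℂ) * x)) D = cfcL (R := ℂ) hD' (G s) := by
    intro s
    rw [fc, cfc_apply (R := ℂ) (fun z : ℂ => Complex.cos ((s : ℂ) * (z.re : ℂ))) D hD'
      (Continuous.continuousOn (by fun_prop))]
    rfl
  have hf_cont : ContinuousOn (fun z : ℂ => (f z.re : ℂ)) (spectrum ℂ D) :=
    Continuous.continuousOn (f.continuous.comp Complex.continuous_re)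
  have hrestr : (⟨_, hf_cont.restrict⟩ : C(spectrum ℂ D, ℂ)) = ∫ s in Set.Icc (-r) r, Fm s := by
    ext z
    rw [ContinuousMap.integral_apply hFint]
    refine (scalar_repr r f hf_even hf_supp (z : ℂ).re).trans ?_
    refine setIntegral_congr_fun measurableSet_Icc fun s _ => ?_
    simp [Fm, G, c, mul_assoc]
  have hkey : fc (fun x => f x) D = ∫ s in Set.Icc (-r) r, cfcL (R := ℂ) hD' (Fm s) := by
    rw [fc, cfc_apply (R := ℂ) (fun z : ℂ => (f z.re : ℂ)) D hD' hf_cont]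
    rw [show (⟨_, hf_cont.restrict⟩ : C(spectrum ℂ D, ℂ))
        = ∫ s in Set.Icc (-r) r, Fm s from hrestr]
    exact ((cfcL (R := ℂ) hD').integral_comp_comm hFint).symm
  constructor
  · have : Integrable (fun s => cfcL (R := ℂ) hD' (Fm s)) (volume.restrict (Set.Icc (-r) r)) :=
      ContinuousLinearMap.integrable_comp _ hFint
    refine this.congr (Filter.Eventually.of_forall fun s => ?_)
    show cfcL (R := ℂ) hD' (c s • G s) = _
    rw [_root_.map_smul]
    simp only [← hfc_cos s, hcdef]
  · rw [hkey]
    refine setIntegral_congr_fun measurableSet_Icc (fun s _ => ?_)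
    show cfcL (R := ℂ) hD' (c s • G s) = _
    rw [_root_.map_smul]
    simp only [← hfc_cos s, hcdef]

end op

/-- if `cos(tD) P = cos(tE) P` for all `t ∈ [0, r]`, then
`f(D) P = f(E) P` for every even Schwartz function `f` whose Fourier transform
is supported in `[-r, r]`. -/
theorem statement3 {H : Type*} [NormedAddCommGroup H] [InnerProductSpace ℂ H]
    [CompleteSpace H] (D E P : H →L[ℂ] H)
    (hD : IsSelfAdjoint D) (hE : IsSelfAdjoint E) (r : ℝ) (hr : 0 < r)
    (hcos : ∀ t ∈ Set.Icc (0 : ℝ) r,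
      fc (fun x : ℝ => Complex.cos ((t : ℂ) * x)) D ∘L P =
        fc (fun x : ℝ => Complex.cos ((t : ℂ) * x)) E ∘L P)
    (f : SchwartzMap ℝ ℂ) (hf_even : ∀ x : ℝ, f (-x) = f x)
    (hf_supp : Function.support (fourierHat fun x => f x) ⊆ Set.Icc (-r) r) :
    fc (fun x => f x) D ∘L P = fc (fun x => f x) E ∘L P := by
  have hcos' : ∀ s ∈ Set.Icc (-r) r,
      fc (fun x : ℝ => Complex.cos ((s : ℂ) * x)) D ∘L P =
        fc (fun x : ℝ => Complex.cos ((s : ℂ) * x)) E ∘L P := by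
    intro s hs
    rcases le_or_gt 0 s with h0 | h0
    · exact hcos s ⟨h0, hs.2⟩
    · have heq : (fun x : ℝ => Complex.cos ((s : ℂ) * x))
          = fun x : ℝ => Complex.cos (((-s : ℝ) : ℂ) * x) := by
        funext x
        push_cast
        rw [neg_mul, Complex.cos_neg]
      rw [heq]
      exact hcos (-s) ⟨by linarith, by linarith [hs.1]⟩
  obtain ⟨hintD, hreprD⟩ := op_repr D hD r f hf_even hf_supp
  obtain ⟨hintE, hreprE⟩ := op_repr E hE r f hf_even hf_supp
  set T : (H →L[ℂ] H) →L[ℂ] (H →L[ℂ] H) := (ContinuousLinearMap.compL ℂ H H H).flip P with hT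
  have hTa : ∀ A : H →L[ℂ] H, T A = A ∘L P := fun _ => rfl
  rw [hreprD, hreprE, ← hTa, ← hTa,
    ← ContinuousLinearMap.integral_comp_comm T hintD,
    ← ContinuousLinearMap.integral_comp_comm T hintE]
  refine setIntegral_congr_fun measurableSet_Icc (fun s hs => ?_)
  rw [_root_.map_smul, _root_.map_smul, hTa, hTa, hcos' s hs]
end

section
/- For every continuous function f : ℝ → ℂ vanishing at infinity and every ε > 0, there exists a Schwartz function g : ℝ → ℂ whose Fourier transform ĝ has compact support and such that sup_{x ∈ ℝ} |f(x) - g(x)| < ε. In other words, Schwartz functions with compactly supported Fourier transform are dense in C₀(ℝ, ℂ) with respect to the supremum norm. -/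
open MeasureTheory ZeroAtInfty Metric Function FourierTransform Real Convolution
open scoped Convolution

-- smooth compactly supported → Schwartz
noncomputable def mySchwartz (f : ℝ → ℂ) (h1 : ContDiff ℝ ((⊤ : ℕ∞) : WithTop ℕ∞) f) (h2 : HasCompactSupport f) :
    SchwartzMap ℝ ℂ where
  toFun := f
  smooth' := h1
  decay' := by
    intro k n
    have h3 : HasCompactSupport (iteratedFDeriv ℝ n f) := h2.iteratedFDeriv n
    have hc : Continuous fun x : ℝ => ‖x‖ ^ k * ‖iteratedFDeriv ℝ n f x‖ :=
      (continuous_norm.pow k).mul (h1.continuous_iteratedFDeriv (by exact_mod_cast le_top)).norm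
    have hcs : HasCompactSupport fun x : ℝ => ‖x‖ ^ k * ‖iteratedFDeriv ℝ n f x‖ := by
      apply HasCompactSupport.intro h3.isCompact
      intro x hx
      have : iteratedFDeriv ℝ n f x = 0 := image_eq_zero_of_notMem_tsupport hx
      simp [this]
    obtain ⟨C, hC⟩ := hc.bounded_above_of_compact_support hcs
    refine ⟨C, fun x => ?_⟩
    have := hC x
    rw [Real.norm_eq_abs, abs_of_nonneg (by positivity)] at this
    exact this

lemma myTemperate {f : ℝ → ℝ} (h1 : ContDiff ℝ ((⊤ : ℕ∞) : WithTop ℕ∞) f) (h2 : HasCompactSupport f) :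
    Function.HasTemperateGrowth f := by
  refine ⟨h1, fun n => ?_⟩
  have h3 : HasCompactSupport (iteratedFDeriv ℝ n f) := h2.iteratedFDeriv n
  obtain ⟨C, hC⟩ := ((h1.continuous_iteratedFDeriv (by exact_mod_cast le_top)).norm).bounded_above_of_compact_support
    h3.norm
  exact ⟨0, C, fun x => by simpa using hC x⟩

-- fourierHat as scaled Fourier integral
lemma fourierHat_eq (f : ℝ → ℂ) (t : ℝ) :
    fourierHat f t = 𝓕 f (t / (2 * π)) := by
  rw [Real.fourier_eq']
  unfold fourierHat
  congr 1
  ext x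
  rw [smul_eq_mul, mul_comm]
  congr 1
  rw [RCLike.inner_apply, starRingEnd_apply, star_trivial]
  have hπ : ((2 * π : ℝ) : ℂ) ≠ 0 := by
    push_cast
    simp [Real.pi_ne_zero]
  push_cast
  push_cast at hπ
  have hπ2 : (π : ℂ) ≠ 0 := by exact_mod_cast Real.pi_ne_zero
  congr 1
  field_simp

set_option maxHeartbeats 1000000 in
/-- Schwartz functions with compactly supported Fourier transform
are dense in `C₀(ℝ, ℂ)` for the supremum norm. -/
theorem statement9 (f : C₀(ℝ, ℂ)) (ε : ℝ) (hε : 0 < ε) :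
    ∃ g : SchwartzMap ℝ ℂ,
      HasCompactSupport (fourierHat fun x => g x) ∧
      (⨆ x : ℝ, ‖f x - g x‖) < ε := by
  set ε' : ℝ := ε / 4 with hε'def
  have hε' : 0 < ε' := by positivity
  -- Step 1: cut off f
  obtain ⟨K, hKc, hKf⟩ : ∃ K : Set ℝ, IsCompact K ∧ ∀ x ∉ K, ‖f x‖ < ε' := by
    have := (zero_at_infty f).eventually (Metric.ball_mem_nhds (0 : ℂ) hε')
    rw [Filter.eventually_iff, Filter.mem_cocompact] at this
    obtain ⟨K, hK1, hK2⟩ := this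
    refine ⟨K, hK1, fun x hx => ?_⟩
    have := hK2 hx
    simpa [dist_eq_norm] using this
  obtain ⟨M, hM⟩ : ∃ M : ℝ, K ⊆ Metric.closedBall 0 M :=
    hKc.isBounded.subset_closedBall 0
  set χ : ℝ → ℝ := fun x => max 0 (min 1 (M + 1 - |x|)) with hχdef
  have hχcont : Continuous χ := by fun_prop
  have hχ01 : ∀ x, 0 ≤ χ x ∧ χ x ≤ 1 := fun x =>
    ⟨le_max_left _ _, max_le (by norm_num) (min_le_left _ _)⟩
  have hχ1 : ∀ x : ℝ, |x| ≤ M → χ x = 1 := by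
    intro x hx
    have h1 : (1:ℝ) ≤ M + 1 - |x| := by linarith
    simp [hχdef, min_eq_left h1]
  have hχ0 : ∀ x : ℝ, M + 1 ≤ |x| → χ x = 0 := by
    intro x hx
    have h1 : M + 1 - |x| ≤ 0 := by linarith
    have h2 : min 1 (M + 1 - |x|) ≤ 0 := le_trans (min_le_right _ _) h1
    simp [hχdef, max_eq_left h2]
  set h : ℝ → ℂ := fun x => (χ x : ℝ) • f x with hhdef
  have hh1 : Continuous h := by fun_prop
  have hh2 : HasCompactSupport h := by
    apply HasCompactSupport.intro (isCompact_closedBall (0:ℝ) (M+1))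
    intro x hx
    have : M + 1 ≤ |x| := by
      simpa [Real.norm_eq_abs] using le_of_lt (by simpa [Metric.mem_closedBall, Real.dist_eq] using hx)
    simp [hhdef, hχ0 x this]
  have hfh : ∀ x, ‖f x - h x‖ ≤ ε' := by
    intro x
    by_cases hx : |x| ≤ M
    · simp [hhdef, hχ1 x hx, hε'.le]
    · have hxK : x ∉ K := by
        intro hxK
        exact hx (by simpa [Real.dist_eq] using hM hxK)
      have h1 : ‖f x - h x‖ = |1 - χ x| * ‖f x‖ := by
        rw [hhdef]
        rw [show f x - χ x • f x = (1 - χ x) • f x by rw [sub_smul, one_smul]]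
        rw [norm_smul, Real.norm_eq_abs]
      rw [h1]
      have h2 : |1 - χ x| ≤ 1 := by
        rcases hχ01 x with ⟨ha, hb⟩
        rw [abs_of_nonneg (by linarith)]; linarith
      calc |1 - χ x| * ‖f x‖ ≤ 1 * ‖f x‖ := by
            apply mul_le_mul_of_nonneg_right h2 (norm_nonneg _)
        _ = ‖f x‖ := one_mul _
        _ ≤ ε' := (hKf x hxK).le
  -- Step 2: smoothing by convolution
  have hhu : UniformContinuous h :=
    hh1.uniformContinuous_of_tendsto_cocompact hh2.is_zero_at_infty
  obtain ⟨δ, hδ, hδ'⟩ := Metric.uniformContinuous_iff.mp hhu ε' hε'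
  set β : ContDiffBump (0:ℝ) := ⟨δ/2, δ, by positivity, by linarith⟩ with hβdef
  set w0 : ℝ → ℂ := (β.normed volume) ⋆[ContinuousLinearMap.lsmul ℝ ℝ, volume] h with hw0def
  have hw0smooth : ContDiff ℝ ((⊤ : ℕ∞) : WithTop ℕ∞) w0 :=
    HasCompactSupport.contDiff_convolution_left _ β.hasCompactSupport_normed
      β.contDiff_normed hh1.locallyIntegrable
  have hw0supp : HasCompactSupport w0 :=
    HasCompactSupport.convolution (L := ContinuousLinearMap.lsmul ℝ ℝ) β.hasCompactSupport_normed hh2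
  have hhw : ∀ x, ‖h x - w0 x‖ ≤ ε' := by
    intro x
    rw [← dist_eq_norm, dist_comm]
    apply dist_convolution_le hε'.le _ β.nonneg_normed β.integral_normed
      hh1.aestronglyMeasurable
    · intro y hy
      exact (hδ' (by simpa [Metric.mem_ball] using hy)).le
    · rw [β.support_normed_eq]
  set w : SchwartzMap ℝ ℂ := mySchwartz w0 hw0smooth hw0supp with hwdef
  -- Step 3: Fourier transform and tail estimate
  set wh : SchwartzMap ℝ ℂ := SchwartzMap.fourierTransformCLE ℝ (SchwartzMap ℝ ℂ) w with hwhdef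
  obtain ⟨R, hR1, hRtail⟩ :
      ∃ R : ℝ, 1 ≤ R ∧ ∫ t in (Metric.closedBall (0:ℝ) R)ᶜ, ‖wh t‖ < ε' := by
    have hwhint : Integrable (⇑wh) volume := wh.integrable
    have hmono : Monotone (fun n : ℕ => Metric.closedBall (0:ℝ) n) := fun a b hab =>
      Metric.closedBall_subset_closedBall (by exact_mod_cast hab)
    have hunion : (⋃ n : ℕ, Metric.closedBall (0:ℝ) n) = Set.univ := by
      ext x
      simp only [Set.mem_iUnion, Set.mem_univ, iff_true, Metric.mem_closedBall]
      obtain ⟨n, hn⟩ := exists_nat_ge (dist x 0)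
      exact ⟨n, hn⟩
    have htend := tendsto_setIntegral_of_monotone (μ := volume) (f := fun t => ‖wh t‖)
      (fun n : ℕ => measurableSet_closedBall) hmono
      (by rw [hunion]; exact hwhint.norm.integrableOn)
    rw [hunion, setIntegral_univ] at htend
    have hsplit : ∀ n : ℕ, (∫ t in (Metric.closedBall (0:ℝ) (n:ℝ))ᶜ, ‖wh t‖)
        = (∫ t : ℝ, ‖wh t‖) - ∫ t in Metric.closedBall (0:ℝ) (n:ℝ), ‖wh t‖ := by
      intro n
      rw [← MeasureTheory.integral_add_compl (measurableSet_closedBall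
        (x := (0:ℝ)) (ε := (n:ℝ))) hwhint.norm]
      ring
    have htail : Filter.Tendsto
        (fun n : ℕ => ∫ t in (Metric.closedBall (0:ℝ) (n:ℝ))ᶜ, ‖wh t‖)
        Filter.atTop (nhds 0) := by
      simp only [hsplit]
      simpa using (htend.const_sub (∫ t : ℝ, ‖wh t‖))
    obtain ⟨n, hn⟩ := (htail.eventually_lt_const hε').exists
    refine ⟨max n 1, le_max_right _ _, lt_of_le_of_lt ?_ hn⟩
    apply setIntegral_mono_set (hwhint.norm.integrableOn)
    · filter_upwards with t using norm_nonneg _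
    · apply Filter.Eventually.of_forall
      apply Set.compl_subset_compl.mpr
      exact Metric.closedBall_subset_closedBall (le_max_left _ _)
  set γ : ContDiffBump (0:ℝ) := ⟨R, R+1, by linarith, by linarith⟩ with hγdef
  have hγt : Function.HasTemperateGrowth (γ : ℝ → ℝ) :=
    myTemperate γ.contDiff γ.hasCompactSupport
  set B : ℂ →L[ℝ] ℝ →L[ℝ] ℂ :=
    (ContinuousLinearMap.lsmul ℝ ℝ : ℝ →L[ℝ] ℂ →L[ℝ] ℂ).flip with hBdef
  set v : SchwartzMap ℝ ℂ := SchwartzMap.bilinLeftCLM B hγt wh with hvdef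
  have hv : ∀ x, v x = γ x • wh x := fun x => rfl
  set g : SchwartzMap ℝ ℂ := (SchwartzMap.fourierTransformCLE ℝ (SchwartzMap ℝ ℂ)).symm v with hgdef
  have hvsupp : HasCompactSupport (v : ℝ → ℂ) := by
    apply HasCompactSupport.intro (isCompact_closedBall (0:ℝ) (R+1))
    intro x hx
    have hγ0 : γ x = 0 := γ.zero_of_le_dist
      (le_of_lt (by simpa [Metric.mem_closedBall] using hx))
    simp [hv, hγ0]
  refine ⟨g, ?_, ?_⟩
  · -- compact support of fourierHat g
    have hFg : 𝓕 (fun x => g x) = (v : ℝ → ℂ) := by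
      have h1 : SchwartzMap.fourierTransformCLE ℝ (SchwartzMap ℝ ℂ) g = v :=
        (SchwartzMap.fourierTransformCLE ℝ (SchwartzMap ℝ ℂ)).apply_symm_apply v
      rw [← h1, SchwartzMap.fourierTransformCLE, FourierTransform.fourierCLE_apply, SchwartzMap.fourier_coe]
    have heq : (fourierHat fun x => g x) = fun t => v (t / (2 * π)) := by
      ext t
      rw [fourierHat_eq, hFg]
    rw [heq]
    have hπpos : (0:ℝ) < 2 * π := by positivity
    apply HasCompactSupport.intro (isCompact_closedBall (0:ℝ) (2 * π * (R+1)))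
    intro t ht
    have ht' : 2 * π * (R + 1) < |t| := by
      simpa [Metric.mem_closedBall, Real.dist_eq, not_le] using ht
    have h1 : R + 1 ≤ |t / (2 * π)| := by
      rw [abs_div, abs_of_pos hπpos, le_div_iff₀ hπpos]
      nlinarith
    have hγ0 : γ (t / (2 * π)) = 0 := γ.zero_of_le_dist (by rw [Real.dist_eq, sub_zero]; exact h1)
    simp [hv, hγ0]
  · -- sup norm estimate
    have hwg : ∀ x, ‖(w : ℝ → ℂ) x - g x‖ ≤ ε' := by
      have hsymm : (SchwartzMap.fourierTransformCLE ℝ (SchwartzMap ℝ ℂ)).symm wh = w :=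
        (SchwartzMap.fourierTransformCLE ℝ (SchwartzMap ℝ ℂ)).symm_apply_apply w
      have hintwh : Integrable (⇑wh) volume := wh.integrable
      have hintv : Integrable (⇑v) volume := v.integrable
      have hint : Integrable (fun t => wh t - v t) volume := hintwh.sub hintv
      have hγ01 : ∀ x : ℝ, 0 ≤ γ x ∧ γ x ≤ 1 := fun x => ⟨γ.nonneg, γ.le_one⟩
      have hkey : (∫ t : ℝ, ‖wh t - v t‖) ≤ ε' := by
        rw [← MeasureTheory.integral_add_compl (measurableSet_closedBall
          (x := (0:ℝ)) (ε := R)) hint.norm]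
        have hzero : (∫ t in Metric.closedBall (0:ℝ) R, ‖wh t - v t‖) = 0 := by
          apply setIntegral_eq_zero_of_forall_eq_zero
          intro x hx
          have hγ1 : γ x = 1 := γ.one_of_mem_closedBall hx
          rw [hv, hγ1, one_smul, sub_self, norm_zero]
        rw [hzero, zero_add]
        refine le_of_lt (lt_of_le_of_lt ?_ hRtail)
        apply setIntegral_mono_on (hint.norm.integrableOn)
          (hintwh.norm.integrableOn) (measurableSet_closedBall.compl)
        intro x _
        rw [hv]
        calc ‖wh x - γ x • wh x‖ = ‖(1 - γ x) • wh x‖ := by rw [sub_smul, one_smul]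
          _ = |1 - γ x| * ‖wh x‖ := by rw [norm_smul, Real.norm_eq_abs]
          _ ≤ 1 * ‖wh x‖ := by
              apply mul_le_mul_of_nonneg_right _ (norm_nonneg _)
              rcases hγ01 x with ⟨ha, hb⟩
              rw [abs_of_nonneg (by linarith)]; linarith
          _ = ‖wh x‖ := one_mul _
      intro x
      have hgw : (w : ℝ → ℂ) x - g x
          = ((SchwartzMap.fourierTransformCLE ℝ (SchwartzMap ℝ ℂ)).symm (wh - v)) x := by
        rw [map_sub, SchwartzMap.sub_apply, hsymm, hgdef]
      rw [hgw]
      have h2 : ((SchwartzMap.fourierTransformCLE ℝ (SchwartzMap ℝ ℂ)).symm (wh - v)) x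
          = 𝓕⁻ (⇑(wh - v)) x := by
        rw [SchwartzMap.fourierTransformCLE, FourierTransform.fourierCLE_symm_apply, SchwartzMap.fourierInv_coe]
      rw [h2]
      calc ‖𝓕⁻ (⇑(wh - v)) x‖
          ≤ ∫ t : ℝ, ‖(wh - v) t‖ :=
            VectorFourier.norm_fourierIntegral_le_integral_norm _ _ _ _ _
        _ = ∫ t : ℝ, ‖wh t - v t‖ := by
            congr 1
        _ ≤ ε' := hkey
    have hbound : ∀ x, ‖f x - g x‖ ≤ 3 * ε' := by
      intro x
      calc ‖f x - g x‖ ≤ ‖f x - h x‖ + ‖h x - g x‖ := norm_sub_le_norm_sub_add_norm_sub _ _ _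
        _ ≤ ‖f x - h x‖ + (‖h x - w0 x‖ + ‖w0 x - g x‖) := by
            gcongr
            exact norm_sub_le_norm_sub_add_norm_sub _ _ _
        _ ≤ ε' + (ε' + ε') := by
            gcongr
            · exact hfh x
            · exact hhw x
            · exact hwg x
        _ = 3 * ε' := by ring
    have hsup : (⨆ x : ℝ, ‖f x - g x‖) ≤ 3 * ε' :=
      Real.iSup_le hbound (by positivity)
    calc (⨆ x : ℝ, ‖f x - g x‖) ≤ 3 * ε' := hsup
      _ < ε := by rw [hε'def]; linarith
end

section
/- Let H₁ and H₂ be complex Hilbert spaces, let D₁ and D₂ be bounded selfadjoint operators on H₁ and H₂ respectively, let U : H₁ → H₂ be a unitary isomorphism, let A₁ and A₂ be bounded operators on H₁ and H₂ respectively, and let r > 0. Suppose U ∘ e^{itD₁} ∘ A₁ = e^{itD₂} ∘ A₂ ∘ U for all t ∈ ℝ with |t| ≤ r. Then for every Schwartz function f : ℝ → ℂ whose Fourier transform f̂ is supported in [-r, r], one has U ∘ f(D₁) ∘ A₁ = f(D₂) ∘ A₂ ∘ U. -/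
open MeasureTheory

open FourierTransform in
/-- Key lemma: if `f` is the inverse Fourier transform of an integrable continuous
function `g` (with the `2π` in the exponent), then `f(D)` is the corresponding
Bochner integral of `g ξ • e^{2πiξD}`. -/
lemma fc_eq_integral {H : Type*} [NormedAddCommGroup H] [InnerProductSpace ℂ H]
    [CompleteSpace H] (D : H →L[ℂ] H) (hD : IsSelfAdjoint D)
    (f g : ℝ → ℂ) (hf : Continuous f) (hgc : Continuous g) (hgi : Integrable g)
    (hfg : ∀ x : ℝ, f x = ∫ ξ : ℝ, g ξ *
      Complex.exp (Complex.I * ((2 * Real.pi * ξ : ℝ) : ℂ) * x)) :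
    Integrable (fun ξ : ℝ => g ξ •
        fc (fun x : ℝ => Complex.exp (Complex.I * ((2 * Real.pi * ξ : ℝ) : ℂ) * x)) D) ∧
    fc f D = ∫ ξ : ℝ, g ξ •
        fc (fun x : ℝ => Complex.exp (Complex.I * ((2 * Real.pi * ξ : ℝ) : ℂ) * x)) D := by
  have ha : IsStarNormal D := hD.isStarNormal
  set K := spectrum ℂ D with hK
  -- the continuous family of functions
  have hGc : Continuous (fun p : ℝ × K => g p.1 *
      Complex.exp (Complex.I * ((2 * Real.pi * p.1 : ℝ) : ℂ) * ((p.2 : ℂ).re : ℂ))) := by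
    fun_prop
  set G : C(ℝ × K, ℂ) := ⟨_, hGc⟩ with hG
  set E : ℝ → C(K, ℂ) := fun ξ => G.curry ξ with hE
  have hEcont : Continuous E := G.curry.continuous
  have hnorm1 : ∀ (t : ℝ) (z : ℂ), ‖Complex.exp (Complex.I * (t : ℂ) * ((z.re : ℝ) : ℂ))‖ = 1 := by
    intro t z
    rw [Complex.norm_exp]
    simp [Complex.mul_re]
  have hEnorm : ∀ ξ, ‖E ξ‖ ≤ ‖g ξ‖ := by
    intro ξ
    refine (ContinuousMap.norm_le _ (norm_nonneg _)).mpr fun z => ?_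
    show ‖g ξ * _‖ ≤ _
    rw [norm_mul, hnorm1, mul_one]
  have hEint : Integrable E := by
    refine hgi.norm.mono' hEcont.aestronglyMeasurable ?_
    filter_upwards with ξ using hEnorm ξ
  -- the cfc homomorphism as a CLM
  set φ : C(K, ℂ) →L[ℂ] (H →L[ℂ] H) :=
    { toLinearMap := (cfcHom ha (R := ℂ)).toAlgHom.toLinearMap
      cont := (cfcHom_isClosedEmbedding ha).continuous } with hφ
  have hcont_e : ∀ ξ : ℝ, ContinuousOn
      (fun z : ℂ => Complex.exp (Complex.I * ((2 * Real.pi * ξ : ℝ) : ℂ) * ((z.re : ℝ) : ℂ))) K :=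
    fun ξ => (by fun_prop : Continuous _).continuousOn
  have hφE : ∀ ξ : ℝ, φ (E ξ) = g ξ •
      fc (fun x : ℝ => Complex.exp (Complex.I * ((2 * Real.pi * ξ : ℝ) : ℂ) * x)) D := by
    intro ξ
    have h1 : fc (fun x : ℝ => Complex.exp (Complex.I * ((2 * Real.pi * ξ : ℝ) : ℂ) * x)) D
        = cfcHom ha ⟨_, (hcont_e ξ).restrict⟩ := cfc_apply _ D ha (hcont_e ξ)
    have h2 : E ξ = g ξ • (⟨_, (hcont_e ξ).restrict⟩ : C(K, ℂ)) := by
      ext z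
      show g ξ * _ = g ξ • _
      rw [smul_eq_mul]
      rfl
    rw [h2, _root_.map_smul, h1]
    rfl
  have hfcont : ContinuousOn (fun z : ℂ => f z.re) K :=
    (hf.comp Complex.continuous_re).continuousOn
  have hmain : (⟨_, hfcont.restrict⟩ : C(K, ℂ)) = ∫ ξ : ℝ, E ξ := by
    ext z
    have := (ContinuousMap.evalCLM ℂ z).integral_comp_comm hEint
    rw [show (∫ ξ : ℝ, E ξ) z = (ContinuousMap.evalCLM ℂ z) (∫ ξ : ℝ, E ξ) from rfl, ← this]
    show f (z : ℂ).re = _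
    rw [hfg]
    rfl
  constructor
  · refine (φ.integrable_comp hEint).congr ?_
    filter_upwards with ξ using (hφE ξ)
  · have : fc f D = φ (∫ ξ : ℝ, E ξ) := by
      rw [← hmain]
      exact cfc_apply _ D ha hfcont
    rw [this, ← φ.integral_comp_comm hEint]
    exact integral_congr_ae (by filter_upwards with ξ using hφE ξ)

open FourierTransform in
/-- if a unitary isomorphism `U` intertwines `e^{itD₁} A₁` and
`e^{itD₂} A₂` for all `|t| ≤ r`, then it intertwines `f(D₁) A₁` and
`f(D₂) A₂` for every Schwartz function `f` with `f̂` supported in `[-r, r]`. -/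
theorem statement10 {H₁ H₂ : Type*}
    [NormedAddCommGroup H₁] [InnerProductSpace ℂ H₁] [CompleteSpace H₁]
    [NormedAddCommGroup H₂] [InnerProductSpace ℂ H₂] [CompleteSpace H₂]
    (D₁ A₁ : H₁ →L[ℂ] H₁) (D₂ A₂ : H₂ →L[ℂ] H₂)
    (hD₁ : IsSelfAdjoint D₁) (hD₂ : IsSelfAdjoint D₂)
    (U : H₁ ≃ₗᵢ[ℂ] H₂) (r : ℝ) (hr : 0 < r)
    (h : ∀ t : ℝ, |t| ≤ r →
      (U.toContinuousLinearEquiv : H₁ →L[ℂ] H₂) ∘L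
          fc (fun x : ℝ => Complex.exp (Complex.I * t * x)) D₁ ∘L A₁ =
        fc (fun x : ℝ => Complex.exp (Complex.I * t * x)) D₂ ∘L A₂ ∘L
          (U.toContinuousLinearEquiv : H₁ →L[ℂ] H₂))
    (f : SchwartzMap ℝ ℂ)
    (hf_supp : Function.support (fourierHat fun x => f x) ⊆ Set.Icc (-r) r) :
    (U.toContinuousLinearEquiv : H₁ →L[ℂ] H₂) ∘L fc (fun x => f x) D₁ ∘L A₁ =
      fc (fun x => f x) D₂ ∘L A₂ ∘L (U.toContinuousLinearEquiv : H₁ →L[ℂ] H₂) := by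
  set g : ℝ → ℂ := 𝓕 (fun x => f x) with hg
  -- relation between `fourierHat` and the Fourier transform `𝓕`
  have hgHat : ∀ ξ : ℝ, g ξ = fourierHat (fun x => f x) (2 * Real.pi * ξ) := by
    intro ξ
    rw [hg, Real.fourier_eq', fourierHat]
    refine integral_congr_ae ?_
    filter_upwards with x
    rw [smul_eq_mul, mul_comm]
    congr 1
    simp only [RCLike.inner_apply, conj_trivial]
    push_cast
    ring
  have hgCLM : g = (SchwartzMap.fourierTransformCLM ℂ f : ℝ → ℂ) := by
    rw [hg, SchwartzMap.fourierTransformCLM_apply, SchwartzMap.fourier_coe]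
  have hgi : Integrable g := by
    rw [hgCLM]; exact (SchwartzMap.fourierTransformCLM ℂ f).integrable
  have hgc : Continuous g := by
    rw [hgCLM]; exact (SchwartzMap.fourierTransformCLM ℂ f).continuous
  -- Fourier inversion
  have hfg : ∀ x : ℝ, f x = ∫ ξ : ℝ, g ξ *
      Complex.exp (Complex.I * ((2 * Real.pi * ξ : ℝ) : ℂ) * x) := by
    intro x
    have hinv := f.continuous.fourierInv_fourier_eq f.integrable (hg ▸ hgi)
    conv_lhs => rw [show (f x : ℂ) = 𝓕⁻ (𝓕 (fun x => f x)) x from (congrFun hinv x).symm]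
    rw [Real.fourierInv_eq']
    refine integral_congr_ae ?_
    filter_upwards with ξ
    rw [smul_eq_mul, mul_comm]
    congr 1
    simp only [RCLike.inner_apply, conj_trivial]
    push_cast
    ring
  -- support of `g`
  have hsupp : ∀ ξ : ℝ, g ξ ≠ 0 → |2 * Real.pi * ξ| ≤ r := by
    intro ξ hξ
    have : (2 * Real.pi * ξ) ∈ Function.support (fourierHat fun x => f x) := by
      rw [Function.mem_support, ← hgHat]; exact hξ
    have := hf_supp this
    exact abs_le.mpr ⟨this.1, this.2⟩
  obtain ⟨i1, e1⟩ := fc_eq_integral D₁ hD₁ (fun x => f x) g f.continuous hgc hgi hfg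
  obtain ⟨i2, e2⟩ := fc_eq_integral D₂ hD₂ (fun x => f x) g f.continuous hgc hgi hfg
  set Uc : H₁ →L[ℂ] H₂ := (U.toContinuousLinearEquiv : H₁ →L[ℂ] H₂) with hUc
  set Ψ₁ : (H₁ →L[ℂ] H₁) →L[ℂ] (H₁ →L[ℂ] H₂) :=
    ((ContinuousLinearMap.compL ℂ H₁ H₁ H₂) Uc).comp
      ((ContinuousLinearMap.compL ℂ H₁ H₁ H₁).flip A₁) with hΨ₁
  set Ψ₂ : (H₂ →L[ℂ] H₂) →L[ℂ] (H₁ →L[ℂ] H₂) :=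
    (ContinuousLinearMap.compL ℂ H₁ H₂ H₂).flip (A₂ ∘L Uc) with hΨ₂
  have hΨ₁app : ∀ T : H₁ →L[ℂ] H₁, Ψ₁ T = Uc ∘L T ∘L A₁ := fun T => rfl
  have hΨ₂app : ∀ T : H₂ →L[ℂ] H₂, Ψ₂ T = T ∘L A₂ ∘L Uc := fun T => rfl
  rw [show Uc ∘L fc (fun x => f x) D₁ ∘L A₁ = Ψ₁ (fc (fun x => f x) D₁) from rfl,
    show fc (fun x => f x) D₂ ∘L A₂ ∘L Uc = Ψ₂ (fc (fun x => f x) D₂) from rfl,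
    e1, e2, ← Ψ₁.integral_comp_comm i1, ← Ψ₂.integral_comp_comm i2]
  refine integral_congr_ae ?_
  filter_upwards with ξ
  by_cases hgz : g ξ = 0
  · simp [hgz]
  · rw [_root_.map_smul, _root_.map_smul, hΨ₁app, hΨ₂app, h (2 * Real.pi * ξ) (hsupp ξ hgz)]
end
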